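/- Let $V$ be a finite-dimensional real inner product space, $v \in V$, and equip each exterior power $\Lambda^k V^*$ with the $v$-induced inner product $\langle \omega, \eta\rangle_v = \langle T_v \omega, \eta\rangle$, where $T_v = \mathrm{id} + v^\flat \wedge \iota_v$ and $\langle\cdot,\cdot\rangle$ is the determinant inner product. Let $\xi \in V^*$ with $\xi \neq 0$, let $A : \Lambda^{k} V^* \to \Lambda^{k+1} V^*$ be wedge multiplication by $\xi$ (on each degree), and let $A^* $ be its adjoint with respect to the inner products $\langle\cdot,\cdot\rangle_v$. Then the operator $A A^* + A^* A : \Lambda^k V^* \to \Lambda^k V^*$ is injective, hence a linear isomorphism. -/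

import Mathlib

open scoped RealInnerProductSpace TensorProduct

noncomputable section

namespace VF

/-- The space of alternating `k`-forms on `V` (i.e. `Λ^k V^*`). -/
abbrev Form (V : Type*) [AddCommMonoid V] [Module ℝ V] (k : ℕ) :=
  AlternatingMap ℝ V ℝ (Fin k)

variable {V : Type*} [NormedAddCommGroup V] [InnerProductSpace ℝ V]

/-- `v^♭ = ⟪v, ·⟫`. -/
def flat (v : V) : V →ₗ[ℝ] ℝ where
  toFun w := ⟪v, w⟫
  map_add' x y := inner_add_right v x y
  map_smul' c x := by simp [inner_smul_right]

section VS
variable {W : Type*} [AddCommGroup W] [Module ℝ W]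

/-- A linear functional regarded as an alternating `1`-form. -/
def oneForm (ξ : W →ₗ[ℝ] ℝ) : Form W 1 :=
  AlternatingMap.ofSubsingleton ℝ W ℝ 0 ξ

/-- Reindexing a `p`-form as a `q`-form along a proof that `p = q`. -/
def castForm {p q : ℕ} (h : p = q) (ω : Form W p) : Form W q :=
  ω.domDomCongr (finCongr h)

/-- Wedge product of alternating forms (shuffle/determinant convention). -/
def wedge {p q : ℕ} (ω : Form W p) (η : Form W q) : Form W (p + q) :=
  ((TensorProduct.lid ℝ ℝ).toLinearMap.compAlternatingMap
    (ω.domCoprod η)).domDomCongr finSumFinEquiv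

/-- Wedge product of a `1`-form (given as a linear functional) with a `k`-form. -/
def wedge1 (ξ : W →ₗ[ℝ] ℝ) {k : ℕ} (ζ : Form W k) : Form W (k + 1) :=
  castForm (Nat.add_comm 1 k) (wedge (oneForm ξ) ζ)

/-- The interior product `ι_v` on `(k+1)`-forms: insertion of `v` into the first slot. -/
def interior (v : W) {k : ℕ} (η : Form W (k + 1)) : Form W k :=
  η.curryLeft v

/-- The interior product `ι_v : Λ^k → Λ^{k-1}`, defined to be `0` on `0`-forms. -/
def interiorz (v : W) : ∀ {k : ℕ}, Form W k → Form W (k - 1)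
  | 0, _ => 0
  | _ + 1, η => interior v η

end VS


section KW
variable {W : Type*} [AddCommGroup W] [Module ℝ W]

lemma units_neg_one_pow_smul (n : ℕ) (r : ℝ) :
    ((((-1 : ℤˣ) ^ n : ℤˣ) : ℤ)) • r = (-1 : ℝ) ^ n * r := by
  rw [zsmul_eq_mul]
  push_cast
  ring

/-- The index equivalence underlying `wedge1`. -/
def cEquiv (k : ℕ) : (Fin 1 ⊕ Fin k) ≃ Fin (k + 1) :=
  finSumFinEquiv.trans (finCongr (Nat.add_comm 1 k))

lemma cEquiv_inl (k : ℕ) (i : Fin 1) : cEquiv k (Sum.inl i) = 0 := by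
  apply Fin.ext
  simp [cEquiv, Fin.ext_iff, Subsingleton.elim i 0]

lemma cEquiv_inr (k : ℕ) (j : Fin k) : cEquiv k (Sum.inr j) = Fin.succ j := by
  apply Fin.ext
  simp [cEquiv, Fin.ext_iff, Nat.add_comm]

/-- The representative permutation for the `t`-th coset. -/
def sigmaT {k : ℕ} (t : Fin (k + 1)) : Equiv.Perm (Fin 1 ⊕ Fin k) :=
  ((cEquiv k).trans (Fin.cycleRange t).symm).trans (cEquiv k).symm

lemma sigmaT_inl {k : ℕ} (t : Fin (k + 1)) (i : Fin 1) :
    sigmaT t (Sum.inl i) = (cEquiv k).symm t := by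
  simp [sigmaT, cEquiv_inl]

lemma sigmaT_inr {k : ℕ} (t : Fin (k + 1)) (j : Fin k) :
    sigmaT t (Sum.inr j) = (cEquiv k).symm (t.succAbove j) := by
  simp [sigmaT, cEquiv_inr]

lemma sign_sigmaT {k : ℕ} (t : Fin (k + 1)) :
    Equiv.Perm.sign (sigmaT t) = (-1) ^ (t : ℕ) := by
  have : sigmaT t = Equiv.permCongr (cEquiv k).symm (Fin.cycleRange t).symm := by
    rw [Equiv.permCongr_def]; rfl
  rw [this, Equiv.Perm.sign_permCongr, Equiv.Perm.sign_symm, Fin.sign_cycleRange]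

/-- Any permutation fixing `inl 0` is in the range of `sumCongrHom`. -/
lemma mem_range_of_fix {k : ℕ} (τ : Equiv.Perm (Fin 1 ⊕ Fin k))
    (hτ : τ (Sum.inl 0) = Sum.inl 0) :
    τ ∈ (Equiv.Perm.sumCongrHom (Fin 1) (Fin k)).range := by
  classical
  have hinr : ∀ j : Fin k, ∃ j' : Fin k, τ (Sum.inr j) = Sum.inr j' := by
    intro j
    cases h : τ (Sum.inr j) with
    | inl a =>
      exfalso
      have : (a : Fin 1) = 0 := Subsingleton.elim _ _
      rw [this, ← hτ] at h
      exact (by simp : (Sum.inr j : Fin 1 ⊕ Fin k) ≠ Sum.inl 0) (τ.injective h)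
    | inr b => exact ⟨b, rfl⟩
  have hinr' : ∀ j : Fin k, ∃ j' : Fin k, τ.symm (Sum.inr j) = Sum.inr j' := by
    intro j
    cases h : τ.symm (Sum.inr j) with
    | inl a =>
      exfalso
      have ha : (a : Fin 1) = 0 := Subsingleton.elim _ _
      have := congrArg τ h
      rw [Equiv.apply_symm_apply, ha, hτ] at this
      simp at this
    | inr b => exact ⟨b, rfl⟩
  choose ρ hρ using hinr
  choose ρ' hρ' using hinr'
  refine ⟨(1, ⟨ρ, ρ', ?_, ?_⟩), ?_⟩
  · intro j
    have := hρ' (ρ j)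
    rw [← hρ j, Equiv.symm_apply_apply] at this
    exact (Sum.inr_injective this).symm
  · intro j
    have := hρ (ρ' j)
    rw [← hρ' j, Equiv.apply_symm_apply] at this
    exact (Sum.inr_injective this).symm
  · ext s
    cases s with
    | inl a =>
      have : (a : Fin 1) = 0 := Subsingleton.elim _ _
      simp [Equiv.Perm.sumCongrHom, this, hτ]
    | inr j => simp [Equiv.Perm.sumCongrHom, hρ]

/-- Coset invariant: the image of `inl 0`. -/
def cosetIdx {k : ℕ} (q : Equiv.Perm.ModSumCongr (Fin 1) (Fin k)) : Fin (k + 1) :=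
  Quotient.liftOn' q (fun σ => cEquiv k (σ (Sum.inl 0))) (by
    intro σ₁ σ₂ H
    rw [QuotientGroup.leftRel_apply] at H
    obtain ⟨⟨sl, sr⟩, h⟩ := H
    have h' : σ₂ = σ₁ * Equiv.Perm.sumCongrHom _ _ (sl, sr) := by
      rw [h, mul_inv_cancel_left]
    rw [h']
    simp [Equiv.Perm.sumCongrHom, Subsingleton.elim (sl 0) 0])

lemma cosetIdx_sigmaT {k : ℕ} (t : Fin (k + 1)) :
    cosetIdx (Quotient.mk'' (sigmaT t) : Equiv.Perm.ModSumCongr (Fin 1) (Fin k)) = t := by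
  show cEquiv k (sigmaT t (Sum.inl 0)) = t
  rw [sigmaT_inl, Equiv.apply_symm_apply]

lemma mk_cosetIdx {k : ℕ} (σ : Equiv.Perm (Fin 1 ⊕ Fin k)) :
    (Quotient.mk'' σ : Equiv.Perm.ModSumCongr (Fin 1) (Fin k)) =
      Quotient.mk'' (sigmaT (cEquiv k (σ (Sum.inl 0)))) := by
  apply Quotient.sound'
  rw [QuotientGroup.leftRel_apply]
  have h0 : sigmaT (cEquiv k (σ (Sum.inl 0))) (Sum.inl 0) = σ (Sum.inl 0) := by
    rw [sigmaT_inl, Equiv.symm_apply_apply]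
  have hfix : (σ⁻¹ * sigmaT (cEquiv k (σ (Sum.inl 0)))) (Sum.inl 0) = Sum.inl 0 := by
    rw [Equiv.Perm.mul_apply, h0, Equiv.Perm.inv_def, Equiv.symm_apply_apply]
  exact mem_range_of_fix _ hfix

/-- The quotient `ModSumCongr (Fin 1) (Fin k)` is equivalent to `Fin (k+1)`. -/
def cosetEquiv (k : ℕ) : Fin (k + 1) ≃ Equiv.Perm.ModSumCongr (Fin 1) (Fin k) where
  toFun t := Quotient.mk'' (sigmaT t)
  invFun := cosetIdx
  left_inv := cosetIdx_sigmaT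
  right_inv q := by
    refine Quotient.inductionOn' q fun σ => ?_
    exact (mk_cosetIdx σ).symm

lemma wedge1_apply (ξ : W →ₗ[ℝ] ℝ) {k : ℕ} (ζ : Form W k) (x : Fin (k + 1) → W) :
    wedge1 ξ ζ x = ∑ t : Fin (k + 1), (-1 : ℝ) ^ (t : ℕ) * (ξ (x t) * ζ (t.removeNth x)) := by
  classical
  have hrw : wedge1 ξ ζ x =
      ∑ σ : Equiv.Perm.ModSumCongr (Fin 1) (Fin k),
        (TensorProduct.lid ℝ ℝ).toLinearMap (AlternatingMap.domCoprod.summand (oneForm ξ) ζ σ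
          (fun s => x (cEquiv k s))) := by
    show (TensorProduct.lid ℝ ℝ).toLinearMap
        ((oneForm ξ).domCoprod ζ (fun s => x (cEquiv k s))) = _
    rw [AlternatingMap.domCoprod_apply, MultilinearMap.sum_apply, map_sum]
  rw [hrw, ← Equiv.sum_comp (cosetEquiv k)]
  apply Finset.sum_congr rfl
  intro t _
  show (TensorProduct.lid ℝ ℝ).toLinearMap
      (AlternatingMap.domCoprod.summand (oneForm ξ) ζ (Quotient.mk'' (sigmaT t))
        (fun s => x (cEquiv k s))) = _
  rw [AlternatingMap.domCoprod.summand_mk'']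
  rw [MultilinearMap.smul_apply, MultilinearMap.domDomCongr_apply,
    MultilinearMap.domCoprod_apply]
  simp only [AlternatingMap.coe_multilinearMap]
  have h1 : (fun i : Fin 1 => x (cEquiv k (sigmaT t (Sum.inl i)))) = fun _ : Fin 1 => x t := by
    funext i
    rw [sigmaT_inl, Equiv.apply_symm_apply]
  have h2 : (fun j : Fin k => x (cEquiv k (sigmaT t (Sum.inr j)))) = t.removeNth x := by
    funext j
    rw [sigmaT_inr, Equiv.apply_symm_apply]
    rfl
  rw [h1, h2, sign_sigmaT, Units.smul_def, map_zsmul]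
  have hlid : (TensorProduct.lid ℝ ℝ).toLinearMap
      ((oneForm ξ) (fun _ : Fin 1 => x t) ⊗ₜ[ℝ] ζ (t.removeNth x))
      = ξ (x t) * ζ (t.removeNth x) := by
    simp [oneForm, smul_eq_mul]
  rw [hlid, units_neg_one_pow_smul]

end KW


section Chunk2
variable {W : Type*} [AddCommGroup W] [Module ℝ W]

lemma wedge1_add (ξ : W →ₗ[ℝ] ℝ) {k : ℕ} (ζ₁ ζ₂ : Form W k) :
    wedge1 ξ (ζ₁ + ζ₂) = wedge1 ξ ζ₁ + wedge1 ξ ζ₂ := by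
  ext x
  simp [wedge1_apply, Finset.sum_add_distrib, mul_add]

lemma wedge1_smul (ξ : W →ₗ[ℝ] ℝ) {k : ℕ} (c : ℝ) (ζ : Form W k) :
    wedge1 ξ (c • ζ) = c • wedge1 ξ ζ := by
  ext x
  rw [wedge1_apply, AlternatingMap.smul_apply, wedge1_apply, smul_eq_mul, Finset.mul_sum]
  apply Finset.sum_congr rfl
  intro t _
  simp only [AlternatingMap.smul_apply, smul_eq_mul]
  ring

lemma wedge1_zero (ξ : W →ₗ[ℝ] ℝ) {k : ℕ} : wedge1 ξ (0 : Form W k) = 0 := by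
  ext x
  simp [wedge1_apply]

lemma interior_apply (u : W) {k : ℕ} (η : Form W (k + 1)) (x : Fin k → W) :
    interior u η x = η (Fin.cons u x) := rfl

lemma interior_add (u : W) {k : ℕ} (η₁ η₂ : Form W (k + 1)) :
    interior u (η₁ + η₂) = interior u η₁ + interior u η₂ := by
  ext x; rfl

lemma interior_smul (u : W) {k : ℕ} (c : ℝ) (η : Form W (k + 1)) :
    interior u (c • η) = c • interior u η := by
  ext x; rfl

/-- Cartan anticommutation identity. -/
lemma cartan (ξ : W →ₗ[ℝ] ℝ) (u : W) {k : ℕ} (ω : Form W (k + 1)) :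
    interior u (wedge1 ξ ω) = ξ u • ω - wedge1 ξ (interior u ω) := by
  ext x
  rw [AlternatingMap.sub_apply, AlternatingMap.smul_apply, interior_apply,
    wedge1_apply, wedge1_apply]
  rw [Fin.sum_univ_succ]
  have h0 : Fin.removeNth 0 ((Fin.cons u x : Fin (k+1+1) → W)) = x := by
    funext r; simp [Fin.removeNth]
  have hsucc : ∀ j : Fin (k + 1),
      Fin.removeNth j.succ ((Fin.cons u x : Fin (k+1+1) → W)) = Fin.cons u (j.removeNth x) := by
    intro j
    funext r
    refine Fin.cases ?_ (fun r' => ?_) r <;>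
      simp [Fin.removeNth, Fin.succ_succAbove_zero, Fin.succ_succAbove_succ]
  rw [h0]
  simp only [Fin.cons_zero, Fin.val_zero, pow_zero, one_mul, Fin.cons_succ, hsucc,
    Fin.val_succ]
  simp only [← interior_apply u ω]
  rw [smul_eq_mul, sub_eq_add_neg, ← Finset.sum_neg_distrib]
  congr 1
  apply Finset.sum_congr rfl
  intro j _
  ring

end Chunk2

/-- The form `v^♭ ∧ ι_v ω` (of the same degree as `ω`); it is `0` on `0`-forms since
`ι_v = 0` there. -/
def vwi (v : V) : ∀ {k : ℕ}, Form V k → Form V k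
  | 0, _ => 0
  | _ + 1, ω => wedge1 (flat v) (interior v ω)

/-- The operator `T_v = id + v^♭ ∧ ι_v` on `k`-forms. -/
def Tv (v : V) {k : ℕ} (ω : Form V k) : Form V k :=
  ω + vwi v ω

variable [FiniteDimensional ℝ V]

/-- The decomposable form `ω₁ ∧ ⋯ ∧ ω_k`, i.e. `x ↦ det (ωᵢ (x j))`. -/
def decomp {k : ℕ} (ω : Fin k → V →ₗ[ℝ] ℝ) : Form V k :=
  Matrix.detRowAlternating.compLinearMap (LinearMap.pi ω)


lemma decomp_apply {k : ℕ} (η : Fin k → V →ₗ[ℝ] ℝ) (x : Fin k → V) :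
    decomp η x = Matrix.det (Matrix.of fun i j => η j (x i)) := rfl

lemma form_sum_apply {W : Type*} [AddCommGroup W] [Module ℝ W] {k : ℕ} {α : Type*}
    (s : Finset α) (f : α → Form W k) (x : Fin k → W) :
    (∑ a ∈ s, f a) x = ∑ a ∈ s, f a x := by
  classical
  induction s using Finset.cons_induction with
  | empty => simp
  | cons a s ha ih => rw [Finset.sum_cons, Finset.sum_cons, AlternatingMap.add_apply, ih]

/-- `ξ ∧ (η₁ ∧ ⋯ ∧ η_k) = ξ ∧ η₁ ∧ ⋯ ∧ η_k`. -/
lemma wedge1_decomp (ξ : V →ₗ[ℝ] ℝ) {k : ℕ} (η : Fin k → V →ₗ[ℝ] ℝ) :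
    wedge1 ξ (decomp η) = decomp (Fin.cons ξ η) := by
  ext x
  rw [wedge1_apply, decomp_apply, Matrix.det_succ_column_zero]
  apply Finset.sum_congr rfl
  intro i _
  rw [decomp_apply]
  have h1 : (Matrix.of fun r c => (Fin.cons ξ η : Fin (k+1) → V →ₗ[ℝ] ℝ) c (x r)) i 0
      = ξ (x i) := by simp
  have h2 : ((Matrix.of fun r c => (Fin.cons ξ η : Fin (k+1) → V →ₗ[ℝ] ℝ) c (x r)).submatrix
        i.succAbove Fin.succ)
      = Matrix.of fun r c => η c (i.removeNth x r) := by
    ext r c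
    simp [Fin.removeNth]
  rw [h1, h2, mul_assoc]

/-- Interior product of a decomposable form. -/
lemma interior_decomp (u : V) {k : ℕ} (η : Fin (k + 1) → V →ₗ[ℝ] ℝ) :
    interior u (decomp η) =
      ∑ j : Fin (k + 1), ((-1 : ℝ) ^ (j : ℕ) * η j u) • decomp (j.removeNth η) := by
  ext x
  rw [interior_apply, decomp_apply]
  rw [Matrix.det_succ_row_zero]
  rw [form_sum_apply]
  apply Finset.sum_congr rfl
  intro j _
  rw [AlternatingMap.smul_apply, smul_eq_mul, decomp_apply]
  have h1 : (Matrix.of fun r c => η c ((Fin.cons u x : Fin (k+1) → V) r)) 0 j = η j u := by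
    simp
  have h2 : ((Matrix.of fun r c => η c ((Fin.cons u x : Fin (k+1) → V) r)).submatrix
        Fin.succ j.succAbove)
      = Matrix.of fun r c => (j.removeNth η) c (x r) := by
    ext r c
    simp [Fin.removeNth]
  rw [h1, h2, mul_assoc]

/-- The inner product on `V^*` induced by the inner product on `V`. -/
def dualInner (ξ ψ : V →ₗ[ℝ] ℝ) : ℝ :=
  ⟪(InnerProductSpace.toDual ℝ V).symm (LinearMap.toContinuousLinearMap ξ),
   (InnerProductSpace.toDual ℝ V).symm (LinearMap.toContinuousLinearMap ψ)⟫

/-- The property of being (the family of) determinant inner products on the exterior powers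
`Λ^k V^*`: a bilinear form on each `Λ^k V^*` whose value on decomposables
`⟨ω₁ ∧ ⋯ ∧ ω_k, η₁ ∧ ⋯ ∧ η_k⟩` is `det (⟨ωᵢ, η_j⟩)`. Together with bilinearity this
determines the inner product uniquely. -/
def IsDetInner (inn : ∀ k, Form V k →ₗ[ℝ] Form V k →ₗ[ℝ] ℝ) : Prop :=
  ∀ (k : ℕ) (ω η : Fin k → V →ₗ[ℝ] ℝ),
    inn k (decomp ω) (decomp η) = Matrix.det (Matrix.of fun i j => dualInner (ω i) (η j))



section BasisLemmas

open scoped Classical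

lemma det_delta {k n : ℕ} {a b : Fin k → Fin n} (ha : StrictMono a) (hb : StrictMono b) :
    Matrix.det (Matrix.of fun i j => if a i = b j then (1 : ℝ) else 0)
      = if a = b then 1 else 0 := by
  by_cases hab : a = b
  · subst hab
    rw [if_pos rfl]
    have h1 : (Matrix.of fun i j => if a i = a j then (1 : ℝ) else 0) = 1 := by
      ext i j
      by_cases h : i = j
      · subst h; simp [Matrix.one_apply]
      · have hne : a i ≠ a j := fun hc => h (ha.injective hc)
        simp [Matrix.one_apply, h, hne]
    rw [h1, Matrix.det_one]
  · rw [if_neg hab]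
    have hex : ∃ i0, ∀ j, a i0 ≠ b j := by
      by_contra hc
      push_neg at hc
      have hsub : (Finset.univ.image a) ⊆ (Finset.univ.image b) := by
        intro t ht
        simp only [Finset.mem_image] at ht ⊢
        obtain ⟨i, _, rfl⟩ := ht
        obtain ⟨j, hj⟩ := hc i
        exact ⟨j, Finset.mem_univ j, hj.symm⟩
      have heq : (Finset.univ.image a) = (Finset.univ.image b) :=
        Finset.eq_of_subset_of_card_le hsub (le_of_eq (by
          rw [Finset.card_image_of_injective _ hb.injective,
            Finset.card_image_of_injective _ ha.injective]))
      haveI : WellFoundedLT (Fin k) := Finite.to_wellFoundedLT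
      have hr : Set.range a = Set.range b := by
        have := congrArg (fun (s : Finset (Fin n)) => (s : Set (Fin n))) heq
        simpa [Finset.coe_image] using this
      exact hab ((StrictMono.range_inj (β := Fin k) (γ := Fin n) ha hb).1 hr)
    obtain ⟨i0, hi0⟩ := hex
    apply Matrix.det_eq_zero_of_row_eq_zero i0
    intro j
    simp [hi0 j]

variable {n : ℕ} (e : OrthonormalBasis (Fin n) ℝ V)

lemma dualInner_flat_left (u : V) (ψ : V →ₗ[ℝ] ℝ) : dualInner (flat u) ψ = ψ u := by
  have h : (InnerProductSpace.toDual ℝ V).symm (LinearMap.toContinuousLinearMap (flat u))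
      = u := by
    have h2 : InnerProductSpace.toDual ℝ V u = LinearMap.toContinuousLinearMap (flat u) := by
      ext w
      rw [InnerProductSpace.toDual_apply_apply]
      rfl
    rw [← h2, LinearIsometryEquiv.symm_apply_apply]
  rw [dualInner, h, real_inner_comm, ← InnerProductSpace.toDual_apply_apply,
    LinearIsometryEquiv.apply_symm_apply]
  rfl

lemma dualInner_flat (x y : V) : dualInner (flat x) (flat y) = ⟪x, y⟫ := by
  rw [dualInner_flat_left]
  show (⟪y, x⟫ : ℝ) = ⟪x, y⟫
  exact real_inner_comm x y

lemma dualInner_eps (i j : Fin n) :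
    dualInner (flat (e i)) (flat (e j)) = if i = j then (1 : ℝ) else 0 := by
  rw [dualInner_flat]
  exact orthonormal_iff_ite.mp e.orthonormal i j

/-- The finset of strictly monotone tuples. -/
noncomputable def Sk (n k : ℕ) : Finset (Fin k → Fin n) :=
  Finset.univ.filter StrictMono

lemma decomp_eps_delta {k : ℕ} {a b : Fin k → Fin n} (ha : StrictMono a) (hb : StrictMono b) :
    decomp (fun i => flat (e (a i))) (fun i => e (b i)) = if a = b then 1 else 0 := by
  have h : Matrix.of (fun i j => flat (e (a j)) (e (b i)))
      = Matrix.transpose (Matrix.of fun i j => if a i = b j then (1 : ℝ) else 0) := by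
    ext i j
    show (⟪e (a j), e (b i)⟫ : ℝ) = _
    rw [orthonormal_iff_ite.mp e.orthonormal]
    simp [Matrix.transpose_apply, eq_comm]
  rw [decomp_apply, h, Matrix.det_transpose, det_delta ha hb]

/-- Expansion of an alternating form in the decomposable basis. -/
lemma expansion {k : ℕ} (ω : Form V k) :
    ω = ∑ a ∈ Sk n k, ω (fun i => e (a i)) • decomp (fun i => flat (e (a i))) := by
  classical
  apply Module.Basis.ext_alternating e.toBasis
  intro v hv
  simp only [OrthonormalBasis.coe_toBasis]
  set s : Finset (Fin n) := Finset.univ.image v with hs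
  have hcard : s.card = k := by
    rw [hs, Finset.card_image_of_injective _ hv, Finset.card_univ, Fintype.card_fin]
  set a0 : Fin k → Fin n := fun i => ((s.orderIsoOfFin hcard) i : Fin n) with ha0
  have ha0mono : StrictMono a0 := fun i j hij =>
    Subtype.coe_lt_coe.2 ((s.orderIsoOfFin hcard).strictMono hij)
  have hmem : ∀ i, v i ∈ s := fun i => Finset.mem_image_of_mem v (Finset.mem_univ i)
  set σf : Fin k → Fin k := fun i => (s.orderIsoOfFin hcard).symm ⟨v i, hmem i⟩ with hσf
  have hva0 : ∀ i, a0 (σf i) = v i := by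
    intro i
    rw [ha0, hσf]
    simp
  have hσinj : Function.Injective σf := by
    intro i j h
    have h2 : a0 (σf i) = a0 (σf j) := congrArg a0 h
    rw [hva0, hva0] at h2
    exact hv h2
  let σ : Equiv.Perm (Fin k) := Equiv.ofBijective σf (Finite.injective_iff_bijective.1 hσinj)
  have hσ : ∀ i, a0 (σ i) = v i := hva0
  have hcomp : (fun i => e (v i)) = (fun i => e (a0 i)) ∘ σ := by
    funext i
    simp [Function.comp, hσ i]
  have hL : ω (fun i => e (v i)) = Equiv.Perm.sign σ • ω (fun i => e (a0 i)) := by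
    rw [hcomp]
    exact ω.map_perm _ σ
  have ha0Sk : a0 ∈ Sk n k := Finset.mem_filter.mpr ⟨Finset.mem_univ _, ha0mono⟩
  rw [hL, form_sum_apply]
  rw [Finset.sum_eq_single a0 (fun a haSk hne => ?_) (fun h => absurd ha0Sk h)]
  · rw [AlternatingMap.smul_apply]
    have : decomp (fun i => flat (e (a0 i))) (fun i => e (v i))
        = Equiv.Perm.sign σ • decomp (fun i => flat (e (a0 i))) (fun i => e (a0 i)) := by
      rw [hcomp]
      exact (decomp _).map_perm _ σ
    rw [this, decomp_eps_delta e ha0mono ha0mono, if_pos rfl]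
    rcases Int.units_eq_one_or (Equiv.Perm.sign σ) with h | h <;>
      rw [h] <;> simp
  · rw [AlternatingMap.smul_apply]
    have hamono : StrictMono a := (Finset.mem_filter.mp haSk).2
    have : decomp (fun i => flat (e (a i))) (fun i => e (v i))
        = Equiv.Perm.sign σ • decomp (fun i => flat (e (a i))) (fun i => e (a0 i)) := by
      rw [hcomp]
      exact (decomp _).map_perm _ σ
    rw [this, decomp_eps_delta e hamono ha0mono, if_neg hne]
    simp

end BasisLemmas


section InnLemmas

variable {n : ℕ} (e : OrthonormalBasis (Fin n) ℝ V)
lemma wedge1_sum {α : Type*} (ξ : V →ₗ[ℝ] ℝ) {k : ℕ} (s : Finset α) (f : α → Form V k) :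
    wedge1 ξ (∑ a ∈ s, f a) = ∑ a ∈ s, wedge1 ξ (f a) := by
  classical
  induction s using Finset.cons_induction with
  | empty => simp [wedge1_zero]
  | cons a s ha ih => rw [Finset.sum_cons, Finset.sum_cons, wedge1_add, ih]

lemma interior_zero (u : V) {k : ℕ} : interior u (0 : Form V (k + 1)) = 0 := by
  ext x; rfl

lemma interior_sum {α : Type*} (u : V) {k : ℕ} (s : Finset α) (f : α → Form V (k + 1)) :
    interior u (∑ a ∈ s, f a) = ∑ a ∈ s, interior u (f a) := by
  classical
  induction s using Finset.cons_induction with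
  | empty => simp [interior_zero]
  | cons a s ha ih => rw [Finset.sum_cons, Finset.sum_cons, interior_add, ih]

variable (inn : ∀ k, Form V k →ₗ[ℝ] Form V k →ₗ[ℝ] ℝ) (hinn : IsDetInner inn)

include e hinn

lemma inn_decomp_delta {k : ℕ} {a b : Fin k → Fin n} (ha : a ∈ Sk n k) (hb : b ∈ Sk n k) :
    inn k (decomp fun i => flat (e (a i))) (decomp fun i => flat (e (b i)))
      = if a = b then 1 else 0 := by
  rw [hinn]
  have h : (Matrix.of fun i j => dualInner (flat (e (a i))) (flat (e (b j))))
      = Matrix.of fun i j => if a i = b j then (1 : ℝ) else 0 := by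
    ext i j
    rw [Matrix.of_apply, Matrix.of_apply, dualInner_eps]
  rw [h, det_delta (Finset.mem_filter.mp ha).2 (Finset.mem_filter.mp hb).2]

lemma inn_formula {k : ℕ} (ω η : Form V k) :
    inn k ω η = ∑ a ∈ Sk n k, ω (fun i => e (a i)) * η (fun i => e (a i)) := by
  classical
  conv_lhs => rw [expansion e ω, expansion e η]
  simp only [map_sum, map_smul, LinearMap.sum_apply, LinearMap.smul_apply, smul_eq_mul]
  apply Finset.sum_congr rfl
  intro a haS
  rw [Finset.sum_eq_single a (fun b hbS hne => ?_) (fun h => absurd haS h)]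
  · rw [inn_decomp_delta e inn hinn haS haS, if_pos rfl, mul_one]
    ring
  · rw [inn_decomp_delta e inn hinn hbS haS, if_neg hne, mul_zero]

lemma inn_comm {k : ℕ} (ω η : Form V k) : inn k ω η = inn k η ω := by
  rw [inn_formula e inn hinn, inn_formula e inn hinn]
  apply Finset.sum_congr rfl
  intro a _
  ring

lemma inn_nonneg {k : ℕ} (ω : Form V k) : 0 ≤ inn k ω ω := by
  rw [inn_formula e inn hinn]
  exact Finset.sum_nonneg fun a _ => mul_self_nonneg _

lemma inn_self_eq_zero {k : ℕ} {ω : Form V k} (h : inn k ω ω = 0) : ω = 0 := by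
  classical
  rw [inn_formula e inn hinn] at h
  have hc : ∀ a ∈ Sk n k, ω (fun i => e (a i)) = 0 := by
    intro a ha
    have := (Finset.sum_eq_zero_iff_of_nonneg
      (fun a _ => mul_self_nonneg (ω fun i => e (a i)))).mp h a ha
    exact mul_self_eq_zero.mp this
  rw [expansion e ω]
  exact Finset.sum_eq_zero fun a ha => by rw [hc a ha, zero_smul]

lemma adj_decomp (u : V) {k : ℕ} (φ : Fin k → V →ₗ[ℝ] ℝ) (ψ : Fin (k + 1) → V →ₗ[ℝ] ℝ) :
    inn (k + 1) (wedge1 (flat u) (decomp φ)) (decomp ψ)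
      = inn k (decomp φ) (interior u (decomp ψ)) := by
  rw [wedge1_decomp, hinn, interior_decomp, map_sum, Matrix.det_succ_row_zero]
  apply Finset.sum_congr rfl
  intro j _
  rw [map_smul, smul_eq_mul, hinn]
  have h1 : (Matrix.of fun i j' =>
      dualInner ((Fin.cons (flat u) φ : Fin (k+1) → V →ₗ[ℝ] ℝ) i) (ψ j')) 0 j = ψ j u := by
    rw [Matrix.of_apply, Fin.cons_zero, dualInner_flat_left]
  have h2 : ((Matrix.of fun i j' =>
        dualInner ((Fin.cons (flat u) φ : Fin (k+1) → V →ₗ[ℝ] ℝ) i) (ψ j')).submatrix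
        Fin.succ j.succAbove)
      = Matrix.of fun r c => dualInner (φ r) ((j.removeNth ψ) c) := by
    ext r c
    simp [Fin.removeNth]
  rw [h1, h2]

lemma adj (u : V) {k : ℕ} (α : Form V k) (β : Form V (k + 1)) :
    inn (k + 1) (wedge1 (flat u) α) β = inn k α (interior u β) := by
  classical
  conv_lhs => rw [expansion e α, expansion e β]
  conv_rhs => rw [expansion e α, expansion e β]
  rw [wedge1_sum, interior_sum]
  simp only [wedge1_smul, interior_smul, map_sum, map_smul, LinearMap.sum_apply,
    LinearMap.smul_apply, smul_eq_mul]
  apply Finset.sum_congr rfl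
  intro a _
  congr 1
  apply Finset.sum_congr rfl
  intro b _
  congr 1
  rw [adj_decomp e inn hinn]

end InnLemmas


section TvLemmas

variable {n : ℕ} (e : OrthonormalBasis (Fin n) ℝ V)
variable (inn : ∀ k, Form V k →ₗ[ℝ] Form V k →ₗ[ℝ] ℝ) (hinn : IsDetInner inn)

lemma Tv_add (v : V) {k : ℕ} (ω η : Form V k) : Tv v (ω + η) = Tv v ω + Tv v η := by
  cases k with
  | zero =>
    show (ω + η) + 0 = (ω + 0) + (η + 0)
    abel
  | succ m =>
    show (ω + η) + wedge1 (flat v) (interior v (ω + η)) = _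
    rw [interior_add, wedge1_add]
    show _ = (ω + wedge1 (flat v) (interior v ω)) + (η + wedge1 (flat v) (interior v η))
    abel

lemma Tv_smul (v : V) {k : ℕ} (c : ℝ) (ω : Form V k) : Tv v (c • ω) = c • Tv v ω := by
  cases k with
  | zero =>
    show (c • ω) + 0 = c • (ω + 0)
    rw [add_zero, add_zero]
  | succ m =>
    show (c • ω) + wedge1 (flat v) (interior v (c • ω)) = c • (ω + wedge1 (flat v) (interior v ω))
    rw [interior_smul, wedge1_smul, smul_add]

lemma Tv_zero (v : V) {k : ℕ} : Tv v (0 : Form V k) = 0 := by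
  cases k with
  | zero => show (0 : Form V 0) + 0 = 0; rw [add_zero]
  | succ m =>
    show (0 : Form V (m+1)) + wedge1 (flat v) (interior v 0) = 0
    rw [interior_zero, wedge1_zero, add_zero]

include e hinn

lemma innT_eq (v : V) {m : ℕ} (ω η : Form V (m + 1)) :
    inn (m + 1) (Tv v ω) η = inn (m + 1) ω η + inn m (interior v ω) (interior v η) := by
  show inn (m + 1) (ω + wedge1 (flat v) (interior v ω)) η = _
  rw [map_add, LinearMap.add_apply, adj e inn hinn]

lemma innT_symm (v : V) {k : ℕ} (ω η : Form V k) :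
    inn k (Tv v ω) η = inn k (Tv v η) ω := by
  cases k with
  | zero =>
    show inn 0 (ω + 0) η = inn 0 (η + 0) ω
    rw [add_zero, add_zero, inn_comm e inn hinn]
  | succ m =>
    rw [innT_eq e inn hinn, innT_eq e inn hinn, inn_comm e inn hinn ω η,
      inn_comm e inn hinn (interior v ω) (interior v η)]

lemma innT_nonneg (v : V) {k : ℕ} (ω : Form V k) : 0 ≤ inn k (Tv v ω) ω := by
  cases k with
  | zero =>
    show 0 ≤ inn 0 (ω + 0) ω
    rw [add_zero]
    exact inn_nonneg e inn hinn ω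
  | succ m =>
    rw [innT_eq e inn hinn]
    have h1 := inn_nonneg e inn hinn ω
    have h2 := inn_nonneg e inn hinn (interior v ω)
    linarith

lemma innT_posdef (v : V) {k : ℕ} {ω : Form V k} (h : inn k (Tv v ω) ω = 0) : ω = 0 := by
  cases k with
  | zero =>
    apply inn_self_eq_zero e inn hinn
    rw [show inn 0 ω ω = inn 0 (ω + 0) ω by rw [add_zero]]
    exact h
  | succ m =>
    apply inn_self_eq_zero e inn hinn
    rw [innT_eq e inn hinn] at h
    have h1 := inn_nonneg e inn hinn ω
    have h2 := inn_nonneg e inn hinn (interior v ω)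
    linarith

end TvLemmas

section Final

lemma formFiniteDimensional (k : ℕ) : FiniteDimensional ℝ (Form V k) := by
  classical
  let e : OrthonormalBasis (Fin (Module.finrank ℝ V)) ℝ V := stdOrthonormalBasis ℝ V
  refine ⟨⟨Finset.image (fun a => decomp fun i => flat (e (a i))) (Sk _ k), ?_⟩⟩
  rw [eq_top_iff]
  intro ω _
  rw [expansion e ω]
  apply Submodule.sum_mem
  intro a ha
  apply Submodule.smul_mem
  apply Submodule.subset_span
  exact Finset.mem_coe.mpr (Finset.mem_image_of_mem _ ha)

lemma exists_ne_zero {ξ : V →ₗ[ℝ] ℝ} (hξ : ξ ≠ 0) : ∃ w, ξ w ≠ 0 := by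
  by_contra hc
  push_neg at hc
  exact hξ (LinearMap.ext fun w => by simp [hc w])

lemma exact_zero {ξ : V →ₗ[ℝ] ℝ} (hξ : ξ ≠ 0) {ω : Form V 0}
    (h : wedge1 ξ ω = 0) : ω = 0 := by
  obtain ⟨w, hw⟩ := exists_ne_zero hξ
  have h1 : wedge1 ξ ω (fun _ => w) = 0 := by rw [h]; rfl
  rw [wedge1_apply] at h1
  rw [Fin.sum_univ_one] at h1
  simp only [Fin.val_zero, pow_zero, one_mul] at h1
  have h2 : ω (Fin.removeNth 0 (fun _ : Fin 1 => w)) = 0 := by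
    rcases mul_eq_zero.mp h1 with h | h
    · exact absurd h hw
    · exact h
  ext x
  rw [Subsingleton.elim x (Fin.removeNth 0 (fun _ : Fin 1 => w)), h2]
  rfl

lemma exact_succ {ξ : V →ₗ[ℝ] ℝ} (hξ : ξ ≠ 0) {m : ℕ} {ω : Form V (m + 1)}
    (h : wedge1 ξ ω = 0) : ∃ τ : Form V m, ω = wedge1 ξ τ := by
  obtain ⟨w, hw⟩ := exists_ne_zero hξ
  have hc := cartan ξ w ω
  rw [h, interior_zero] at hc
  have h2 : ξ w • ω = wedge1 ξ (interior w ω) := by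
    have := hc.symm
    rwa [sub_eq_zero] at this
  refine ⟨(ξ w)⁻¹ • interior w ω, ?_⟩
  rw [wedge1_smul, ← h2, smul_smul, inv_mul_cancel₀ hw, one_smul]

end Final

/-- The operator `A A^* + A^* A` on `Λ^k V^*`, where `A` is wedge multiplication by `ξ`
(raising the degree by one) and `B m` plays the role of its degree-lowering adjoint
`A^* : Λ^{m+1} V^* → Λ^m V^*` (on `Λ^0` the term `A A^*` is absent since `A^* = 0` there). -/
def symbLap {V : Type*} [NormedAddCommGroup V] [InnerProductSpace ℝ V]
    (ξ : V →ₗ[ℝ] ℝ) (B : ∀ m, Form V (m + 1) →ₗ[ℝ] Form V m) :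
    ∀ {k : ℕ}, Form V k → Form V k
  | 0, ω => B 0 (wedge1 ξ ω)
  | _ + 1, ω => wedge1 ξ (B _ ω) + B _ (wedge1 ξ ω)

/-- `symbLap` as a linear map. -/
def symbLapLM {V : Type*} [NormedAddCommGroup V] [InnerProductSpace ℝ V] (ξ : V →ₗ[ℝ] ℝ) (B : ∀ m, Form V (m + 1) →ₗ[ℝ] Form V m) (k : ℕ) :
    Form V k →ₗ[ℝ] Form V k where
  toFun := symbLap ξ B
  map_add' ω η := by
    cases k with
    | zero =>
      show B 0 (wedge1 ξ (ω + η)) = B 0 (wedge1 ξ ω) + B 0 (wedge1 ξ η)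
      rw [wedge1_add, map_add]
    | succ m =>
      show wedge1 ξ (B m (ω + η)) + B (m + 1) (wedge1 ξ (ω + η)) = _
      rw [map_add, wedge1_add, wedge1_add, map_add]
      show _ = (wedge1 ξ (B m ω) + B (m + 1) (wedge1 ξ ω))
        + (wedge1 ξ (B m η) + B (m + 1) (wedge1 ξ η))
      abel
  map_smul' c ω := by
    cases k with
    | zero =>
      show B 0 (wedge1 ξ (c • ω)) = c • B 0 (wedge1 ξ ω)
      rw [wedge1_smul, map_smul]
    | succ m =>
      show wedge1 ξ (B m (c • ω)) + B (m + 1) (wedge1 ξ (c • ω)) = _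
      rw [map_smul, wedge1_smul, wedge1_smul, map_smul]
      show _ = c • (wedge1 ξ (B m ω) + B (m + 1) (wedge1 ξ ω))
      rw [smul_add]


/-- if `ξ ≠ 0`, `A = ξ ∧ ·` and `A^*` is its adjoint with respect to the
`v`-induced inner products `⟨ω, η⟩_v = ⟨T_v ω, η⟩`, then `A A^* + A^* A : Λ^k V^* → Λ^k V^*`
is injective, hence a linear isomorphism. -/
theorem symbol_laplacian_bijective
    {V : Type*} [NormedAddCommGroup V] [InnerProductSpace ℝ V] [FiniteDimensional ℝ V]
    (v : V) (inn : ∀ k, Form V k →ₗ[ℝ] Form V k →ₗ[ℝ] ℝ) (hinn : IsDetInner inn)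
    (ξ : V →ₗ[ℝ] ℝ) (hξ : ξ ≠ 0)
    (B : ∀ m, Form V (m + 1) →ₗ[ℝ] Form V m)
    (hB : ∀ (m : ℕ) (α : Form V m) (β : Form V (m + 1)),
      inn (m + 1) (Tv v (wedge1 ξ α)) β = inn m (Tv v α) (B m β))
    (k : ℕ) :
    Function.Injective (fun ω : Form V k => symbLap ξ B ω) ∧
      Function.Bijective (fun ω : Form V k => symbLap ξ B ω) := by
  classical
  let e : OrthonormalBasis (Fin (Module.finrank ℝ V)) ℝ V := stdOrthonormalBasis ℝ V
  haveI : FiniteDimensional ℝ (Form V k) := formFiniteDimensional k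
  have hker : ∀ ω : Form V k, symbLap ξ B ω = 0 → ω = 0 := by
    intro ω hω
    cases k with
    | zero =>
      have h0 : B 0 (wedge1 ξ ω) = 0 := hω
      have h1 : inn 1 (Tv v (wedge1 ξ ω)) (wedge1 ξ ω) = 0 := by
        rw [hB 0 ω (wedge1 ξ ω), h0, map_zero]
      exact exact_zero hξ (innT_posdef e inn hinn v h1)
    | succ m =>
      have h0 : wedge1 ξ (B m ω) + B (m + 1) (wedge1 ξ ω) = 0 := hω
      have hsum : inn (m + 1) (Tv v (wedge1 ξ (B m ω))) ω
          + inn (m + 1) (Tv v (B (m + 1) (wedge1 ξ ω))) ω = 0 := by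
        have hcg := congrArg (fun τ => inn (m + 1) (Tv v τ) ω) h0
        simpa [Tv_add, Tv_zero, map_add, LinearMap.add_apply] using hcg
      have hA : inn (m + 1) (Tv v (wedge1 ξ (B m ω))) ω
          = inn m (Tv v (B m ω)) (B m ω) := hB m (B m ω) ω
      have hC : inn (m + 1) (Tv v (B (m + 1) (wedge1 ξ ω))) ω
          = inn (m + 1 + 1) (Tv v (wedge1 ξ ω)) (wedge1 ξ ω) := by
        rw [innT_symm e inn hinn, ← hB (m + 1) ω (wedge1 ξ ω)]
      have key : inn m (Tv v (B m ω)) (B m ω)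
          + inn (m + 1 + 1) (Tv v (wedge1 ξ ω)) (wedge1 ξ ω) = 0 := by
        rw [← hA, ← hC]; exact hsum
      have n1 := innT_nonneg e inn hinn v (B m ω)
      have n2 := innT_nonneg e inn hinn v (wedge1 ξ ω)
      have hBm : B m ω = 0 := innT_posdef e inn hinn v (by linarith)
      have hW : wedge1 ξ ω = 0 := innT_posdef e inn hinn v (by linarith)
      obtain ⟨τ, hτ⟩ := exact_succ hξ hW
      have hfin : inn (m + 1) (Tv v ω) ω = 0 := by
        calc inn (m + 1) (Tv v ω) ω
            = inn (m + 1) (Tv v (wedge1 ξ τ)) ω := by rw [← hτ]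
          _ = inn m (Tv v τ) (B m ω) := hB m τ ω
          _ = 0 := by rw [hBm, map_zero]
      exact innT_posdef e inn hinn v hfin
  have hinj : Function.Injective (symbLapLM ξ B k) :=
    (injective_iff_map_eq_zero (symbLapLM ξ B k)).2 fun ω h => hker ω h
  have hfun : (fun ω : Form V k => symbLap ξ B ω) = ⇑(symbLapLM ξ B k) := rfl
  rw [hfun]
  exact ⟨hinj, hinj, LinearMap.injective_iff_surjective.mp hinj⟩

end VF
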